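/- Let A be a discrete valuation ring with fraction field K and u_1,u_2,u_3,v_1,v_2,v_3 ∈ K with D = det[(1,1,1);(u_1,u_2,u_3);(v_1,v_2,v_3)] ≠ 0. If a = (1/D)(u_1-u_2)(u_2-u_3)(u_3-u_1) ∈ A and d = (1/D)(v_1-v_2)(v_2-v_3)(v_3-v_1) ∈ A, and u_i, v_i are all in A, then b = (1/D)·Σ_{i=1}^{3}(u_i-u_{i+1})(u_{i+1}-u_{i+2})(v_{i+2}-v_i) ∈ A. -/

import Mathlib

set_option maxHeartbeats 4000000 in
lemma cubic_helper {K : Type*} [Field K] (x₁ x₂ x₃ y₁ y₂ y₃ E : K)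
    (hE : E ≠ 0)
    (hEdef : E = x₂ * y₃ - x₃ * y₂ - (x₁ * y₃ - x₃ * y₁) + (x₁ * y₂ - x₂ * y₁)) :
    (1 / E * ((x₁ - x₂) * (x₂ - x₃) * (y₃ - y₁) + (x₂ - x₃) * (x₃ - x₁) * (y₁ - y₂)
        + (x₃ - x₁) * (x₁ - x₂) * (y₂ - y₃))) ^ 3
      + ((x₁ - 2 * x₂ + x₃) * (x₂ - 2 * x₃ + x₁) + (x₁ - 2 * x₂ + x₃) * (x₃ - 2 * x₁ + x₂)
          + (x₂ - 2 * x₃ + x₁) * (x₃ - 2 * x₁ + x₂))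
        * (1 / E * ((x₁ - x₂) * (x₂ - x₃) * (y₃ - y₁) + (x₂ - x₃) * (x₃ - x₁) * (y₁ - y₂)
            + (x₃ - x₁) * (x₁ - x₂) * (y₂ - y₃)))
      + ((x₁ - 2 * x₂ + x₃) * (x₂ - 2 * x₃ + x₁) * (x₃ - 2 * x₁ + x₂)
        - 27 * (1 / E * ((x₁ - x₂) * (x₂ - x₃) * (x₃ - x₁))) ^ 2
            * (1 / E * ((y₁ - y₂) * (y₂ - y₃) * (y₃ - y₁)))) = 0 := by
  have key : ((x₁ - x₂) * (x₂ - x₃) * (y₃ - y₁) + (x₂ - x₃) * (x₃ - x₁) * (y₁ - y₂)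
        + (x₃ - x₁) * (x₁ - x₂) * (y₂ - y₃)) ^ 3
      + ((x₁ - 2 * x₂ + x₃) * (x₂ - 2 * x₃ + x₁) + (x₁ - 2 * x₂ + x₃) * (x₃ - 2 * x₁ + x₂)
          + (x₂ - 2 * x₃ + x₁) * (x₃ - 2 * x₁ + x₂))
        * ((x₁ - x₂) * (x₂ - x₃) * (y₃ - y₁) + (x₂ - x₃) * (x₃ - x₁) * (y₁ - y₂)
            + (x₃ - x₁) * (x₁ - x₂) * (y₂ - y₃)) * E ^ 2
      + (x₁ - 2 * x₂ + x₃) * (x₂ - 2 * x₃ + x₁) * (x₃ - 2 * x₁ + x₂) * E ^ 3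
      - 27 * ((x₁ - x₂) * (x₂ - x₃) * (x₃ - x₁)) ^ 2 * ((y₁ - y₂) * (y₂ - y₃) * (y₃ - y₁)) = 0 := by
    subst hEdef; ring
  have hE3 : (1 : K) = (1 / E) ^ 3 * E ^ 3 := by
    field_simp
  have hE2 : (1 / E : K) = (1 / E) ^ 3 * E ^ 2 := by
    field_simp
  linear_combination (1 / E) ^ 3 * key
    + ((x₁ - 2 * x₂ + x₃) * (x₂ - 2 * x₃ + x₁) * (x₃ - 2 * x₁ + x₂)) * hE3
    + (((x₁ - 2 * x₂ + x₃) * (x₂ - 2 * x₃ + x₁) + (x₁ - 2 * x₂ + x₃) * (x₃ - 2 * x₁ + x₂)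
          + (x₂ - 2 * x₃ + x₁) * (x₃ - 2 * x₁ + x₂))
        * ((x₁ - x₂) * (x₂ - x₃) * (y₃ - y₁) + (x₂ - x₃) * (x₃ - x₁) * (y₁ - y₂)
            + (x₃ - x₁) * (x₁ - x₂) * (y₂ - y₃))) * hE2



set_option maxHeartbeats 1000000 in
/-- Integrality of the middle coefficient: if `u₁,u₂,u₃,v₁,v₂,v₃` lie in a
discrete valuation ring `A` with fraction field `K`, `D` (the determinant of the
matrix with rows `(1,1,1)`, `(uᵢ)`, `(vᵢ)`) is nonzero, and the outer coefficients
`a = (1/D)(u₁-u₂)(u₂-u₃)(u₃-u₁)` and `d = (1/D)(v₁-v₂)(v₂-v₃)(v₃-v₁)` lie in `A`,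
then so does `b = (1/D)·Σᵢ (uᵢ-uᵢ₊₁)(uᵢ₊₁-uᵢ₊₂)(vᵢ₊₂-vᵢ)` (indices mod 3). -/
theorem cubic_middle_coeff_integral
    (A : Type*) [CommRing A] [IsDomain A] [IsDiscreteValuationRing A]
    (K : Type*) [Field K] [Algebra A K] [IsFractionRing A K]
    (u₁ u₂ u₃ v₁ v₂ v₃ : A)
    (D : K)
    (hD : D = Matrix.det !![(1 : K), 1, 1;
        algebraMap A K u₁, algebraMap A K u₂, algebraMap A K u₃;
        algebraMap A K v₁, algebraMap A K v₂, algebraMap A K v₃])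
    (hD0 : D ≠ 0)
    (ha : (1 / D) * ((algebraMap A K u₁ - algebraMap A K u₂)
        * (algebraMap A K u₂ - algebraMap A K u₃)
        * (algebraMap A K u₃ - algebraMap A K u₁)) ∈ (algebraMap A K).range)
    (hd : (1 / D) * ((algebraMap A K v₁ - algebraMap A K v₂)
        * (algebraMap A K v₂ - algebraMap A K v₃)
        * (algebraMap A K v₃ - algebraMap A K v₁)) ∈ (algebraMap A K).range) :
    (1 / D) * ((algebraMap A K u₁ - algebraMap A K u₂)
        * (algebraMap A K u₂ - algebraMap A K u₃)
        * (algebraMap A K v₃ - algebraMap A K v₁)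
      + (algebraMap A K u₂ - algebraMap A K u₃)
        * (algebraMap A K u₃ - algebraMap A K u₁)
        * (algebraMap A K v₁ - algebraMap A K v₂)
      + (algebraMap A K u₃ - algebraMap A K u₁)
        * (algebraMap A K u₁ - algebraMap A K u₂)
        * (algebraMap A K v₂ - algebraMap A K v₃)) ∈ (algebraMap A K).range := by
  obtain ⟨a', ha'⟩ := ha
  obtain ⟨d', hd'⟩ := hd
  have hint : IsIntegral A ((1 / D) * ((algebraMap A K u₁ - algebraMap A K u₂)
        * (algebraMap A K u₂ - algebraMap A K u₃)
        * (algebraMap A K v₃ - algebraMap A K v₁)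
      + (algebraMap A K u₂ - algebraMap A K u₃)
        * (algebraMap A K u₃ - algebraMap A K u₁)
        * (algebraMap A K v₁ - algebraMap A K v₂)
      + (algebraMap A K u₃ - algebraMap A K u₁)
        * (algebraMap A K u₁ - algebraMap A K u₂)
        * (algebraMap A K v₂ - algebraMap A K v₃))) := by
    set c₁ : A := u₁ - 2*u₂ + u₃ with hc₁
    set c₂ : A := u₂ - 2*u₃ + u₁ with hc₂
    set c₃ : A := u₃ - 2*u₁ + u₂ with hc₃
    refine ⟨Polynomial.X^3
        + Polynomial.C (c₁*c₂ + c₁*c₃ + c₂*c₃) * Polynomial.X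
        + Polynomial.C (c₁*c₂*c₃ - 27*a'^2*d'), ?_, ?_⟩
    · monicity!
    · simp only [Polynomial.eval₂_add, Polynomial.eval₂_mul, Polynomial.eval₂_pow,
        Polynomial.eval₂_X, Polynomial.eval₂_C]
      rw [hc₁, hc₂, hc₃]
      simp only [map_add, map_sub, map_mul, map_pow, map_ofNat]
      rw [ha', hd']
      have hEdef : D = algebraMap A K u₂ * algebraMap A K v₃
          - algebraMap A K u₃ * algebraMap A K v₂
          - (algebraMap A K u₁ * algebraMap A K v₃ - algebraMap A K u₃ * algebraMap A K v₁)
          + (algebraMap A K u₁ * algebraMap A K v₂ - algebraMap A K u₂ * algebraMap A K v₁) := by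
        rw [hD, Matrix.det_fin_three]
        simp
        ring
      exact cubic_helper _ _ _ _ _ _ D hD0 hEdef
  exact IsIntegrallyClosed.isIntegral_iff.mp hint
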